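/- Fix p ∈ (1,2], positive integers m, k, N, and r ∈ (0,1) with 2r^{kN}(1+r^m) ≤ p(1−r^m)(1−r^k). Then for every a ∈ [0,1], Φ'(a) := 2a r^{kN}/(1−r^k) − p(1−r^{2m})(r^m+a)^{p−1}/(1+a r^m)^{p+1} ≤ 0; i.e., the function Φ(a) = 1 − ((r^m+a)/(1+a r^m))^p − (1−a²)r^{kN}/(1−r^k) is nonincreasing on [0,1]. -/

import Mathlib

/-- Key algebraic inequality: for `a ∈ [0,1]`, `s ∈ (0,1)`, `p ∈ (1,2]`,
`a * (1+a*s)^(p+1) ≤ (1+s)^2 * (s+a)^(p-1)`. -/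
lemma key_ineq (a s p : ℝ) (ha0 : 0 ≤ a) (ha1 : a ≤ 1) (hs0 : 0 < s) (hs1 : s < 1)
    (hp1 : 1 < p) (hp2 : p ≤ 2) :
    a * (1 + a * s) ^ (p + 1) ≤ (1 + s) ^ (2 : ℕ) * (s + a) ^ (p - 1) := by
  rcases eq_or_lt_of_le ha0 with h0 | h0
  · rw [← h0]
    have : (0:ℝ) < (1 + s) ^ (2:ℕ) * (s + 0) ^ (p - 1) := by positivity
    linarith
  have hden : (0:ℝ) < 1 + a * s := by positivity
  -- a ≤ a^(p-1)
  have h1 : a ≤ a ^ (p - 1) := by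
    have := Real.rpow_le_rpow_of_exponent_ge h0 ha1 (by linarith : p - 1 ≤ 1)
    simpa [Real.rpow_one] using this
  -- (1+a*s)^(p+1) = (1+a*s)^(p-1) * (1+a*s)^2
  have h2 : (1 + a * s) ^ (p + 1) = (1 + a * s) ^ (p - 1) * (1 + a * s) ^ (2:ℕ) := by
    rw [← Real.rpow_natCast (1 + a * s) 2, ← Real.rpow_add hden]
    congr 1; ring
  -- (1+a*s)^2 ≤ (1+s)^2
  have h3 : (1 + a * s) ^ (2:ℕ) ≤ (1 + s) ^ (2:ℕ) := by
    apply pow_le_pow_left₀ (by positivity) (by nlinarith)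
  -- a^(p-1) * (1+a*s)^(p-1) = (a*(1+a*s))^(p-1) ≤ (s+a)^(p-1)
  have h4 : a ^ (p - 1) * (1 + a * s) ^ (p - 1) ≤ (s + a) ^ (p - 1) := by
    rw [← Real.mul_rpow ha0 hden.le]
    apply Real.rpow_le_rpow (by positivity) _ (by linarith)
    nlinarith
  calc a * (1 + a * s) ^ (p + 1)
      = a * ((1 + a * s) ^ (p - 1) * (1 + a * s) ^ (2:ℕ)) := by rw [h2]
    _ ≤ a ^ (p - 1) * ((1 + a * s) ^ (p - 1) * (1 + s) ^ (2:ℕ)) := by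
        have hA : (0:ℝ) ≤ (1 + a * s) ^ (p - 1) := by positivity
        have hB : (0:ℝ) ≤ (1 + a * s) ^ (2:ℕ) := by positivity
        have := mul_le_mul h1 (mul_le_mul_of_nonneg_left h3 hA)
          (by positivity) (by positivity)
        linarith [this]
    _ = (1 + s) ^ (2:ℕ) * (a ^ (p - 1) * (1 + a * s) ^ (p - 1)) := by ring
    _ ≤ (1 + s) ^ (2:ℕ) * (s + a) ^ (p - 1) := by
        apply mul_le_mul_of_nonneg_left h4 (by positivity)

/-- For `p ∈ (1,2]` and `r ∈ (0,1)` with `2 r^{kN}(1+r^m) ≤ p(1-r^m)(1-r^k)`, the derivative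
`Φ'(a) = 2a r^{kN}/(1-r^k) - p(1-r^{2m})(r^m+a)^{p-1}/(1+a r^m)^{p+1}` is `≤ 0` on `[0,1]`;
i.e. `Φ(a) = 1 - ((r^m+a)/(1+a r^m))^p - (1-a²)r^{kN}/(1-r^k)` is nonincreasing on `[0,1]`. -/
theorem stmt_16 (m k N : ℕ) (hm : 1 ≤ m) (hk : 1 ≤ k) (hN : 1 ≤ N)
    (p : ℝ) (hp : p ∈ Set.Ioc (1 : ℝ) 2) (r : ℝ) (hr : r ∈ Set.Ioo (0 : ℝ) 1)
    (hcond : 2 * r ^ (k * N) * (1 + r ^ m) ≤ p * (1 - r ^ m) * (1 - r ^ k)) :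
    (∀ a : ℝ, a ∈ Set.Icc (0 : ℝ) 1 →
      2 * a * r ^ (k * N) / (1 - r ^ k) -
        p * (1 - r ^ (2 * m)) * (r ^ m + a) ^ (p - 1) / (1 + a * r ^ m) ^ (p + 1) ≤ 0) ∧
    AntitoneOn
      (fun a : ℝ =>
        1 - ((r ^ m + a) / (1 + a * r ^ m)) ^ p - (1 - a ^ 2) * r ^ (k * N) / (1 - r ^ k))
      (Set.Icc (0 : ℝ) 1) := by
  obtain ⟨hr0, hr1⟩ := hr
  obtain ⟨hp1, hp2⟩ := hp
  set s := r ^ m with hs_def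
  set c := r ^ (k * N) with hc_def
  have hs0 : 0 < s := by positivity
  have hs1 : s < 1 := pow_lt_one₀ hr0.le hr1 (by omega)
  have hc0 : 0 < c := by positivity
  have hrk1 : r ^ k < 1 := pow_lt_one₀ hr0.le hr1 (by omega)
  have hD : (0:ℝ) < 1 - r ^ k := by linarith
  have h2m : r ^ (2 * m) = s ^ (2:ℕ) := by rw [mul_comm, pow_mul]
  -- Part 1
  have part1 : ∀ a : ℝ, a ∈ Set.Icc (0 : ℝ) 1 →
      2 * a * c / (1 - r ^ k) -
        p * (1 - r ^ (2 * m)) * (s + a) ^ (p - 1) / (1 + a * s) ^ (p + 1) ≤ 0 := by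
    intro a ⟨ha0, ha1⟩
    rw [sub_nonpos, h2m]
    have hden : (0:ℝ) < 1 + a * s := by positivity
    have hX : (0:ℝ) < (1 + a * s) ^ (p + 1) := Real.rpow_pos_of_pos hden _
    have hY : (0:ℝ) ≤ (s + a) ^ (p - 1) := Real.rpow_nonneg (by positivity) _
    -- step A : 2*c/(1-r^k) ≤ p*(1-s)/(1+s)
    have hA : 2 * c / (1 - r ^ k) ≤ p * (1 - s) / (1 + s) := by
      rw [div_le_div_iff₀ hD (by linarith)]
      nlinarith [hcond]
    have key := key_ineq a s p ha0 ha1 hs0 hs1 hp1 hp2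
    -- from key : a * p*(1-s)/(1+s) ≤ p*(1-s^2)*(s+a)^(p-1)/(1+a*s)^(p+1)
    have hB : a * (p * (1 - s)) / (1 + s) ≤
        p * (1 - s ^ (2:ℕ)) * (s + a) ^ (p - 1) / (1 + a * s) ^ (p + 1) := by
      rw [div_le_div_iff₀ (by linarith) hX]
      have hps : (0:ℝ) < p * (1 - s) := by nlinarith
      have : a * (1 + a * s) ^ (p + 1) * (p * (1 - s)) ≤
          (1 + s) ^ (2:ℕ) * (s + a) ^ (p - 1) * (p * (1 - s)) :=
        mul_le_mul_of_nonneg_right key hps.le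
      nlinarith [this]
    calc 2 * a * c / (1 - r ^ k) = a * (2 * c / (1 - r ^ k)) := by ring
      _ ≤ a * (p * (1 - s) / (1 + s)) := by
          apply mul_le_mul_of_nonneg_left hA ha0
      _ = a * (p * (1 - s)) / (1 + s) := by ring
      _ ≤ p * (1 - s ^ (2:ℕ)) * (s + a) ^ (p - 1) / (1 + a * s) ^ (p + 1) := hB
  refine ⟨part1, ?_⟩
  -- Part 2
  have hden : ∀ x ∈ Set.Icc (0:ℝ) 1, (0:ℝ) < 1 + x * s := by
    intro x hx; nlinarith [hx.1, hs0]
  -- derivative computation on the interior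
  have hderiv : ∀ x ∈ Set.Ioo (0:ℝ) 1,
      HasDerivAt (fun a : ℝ =>
        1 - ((s + a) / (1 + a * s)) ^ p - (1 - a ^ 2) * c / (1 - r ^ k))
        (2 * x * c / (1 - r ^ k) -
          p * (1 - r ^ (2 * m)) * (s + x) ^ (p - 1) / (1 + x * s) ^ (p + 1)) x := by
    intro x hx
    obtain ⟨hx0, hx1⟩ := hx
    have hdx : (0:ℝ) < 1 + x * s := by nlinarith
    have hnum : (0:ℝ) < s + x := by linarith
    have hq : (0:ℝ) < (s + x) / (1 + x * s) := by positivity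
    have hg : HasDerivAt (fun a : ℝ => (s + a) / (1 + a * s))
        ((1 * (1 + x * s) - (s + x) * (1 * s + x * 0)) / (1 + x * s) ^ 2) x := by
      exact ((hasDerivAt_id x).const_add s).div
        (((hasDerivAt_id x).mul (hasDerivAt_const x s)).const_add 1) hdx.ne'
    have hf : HasDerivAt (fun a : ℝ => ((s + a) / (1 + a * s)) ^ p)
        (((1 * (1 + x * s) - (s + x) * (1 * s + x * 0)) / (1 + x * s) ^ 2) * p *
          ((s + x) / (1 + x * s)) ^ (p - 1)) x :=
      hg.rpow_const (Or.inl hq.ne')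
    have ht : HasDerivAt (fun a : ℝ => (1 - a ^ 2) * c / (1 - r ^ k))
        (-(2 * x) * c / (1 - r ^ k)) x := by
      have := (((hasDerivAt_pow 2 x).const_sub 1).mul_const c).div_const (1 - r ^ k)
      simpa using this
    have htotal := (((hasDerivAt_const x (1:ℝ)).sub hf).sub ht)
    refine htotal.congr_deriv (Eq.symm ?_)
    have hqpow : ((s + x) / (1 + x * s)) ^ (p - 1)
        = (s + x) ^ (p - 1) / (1 + x * s) ^ (p - 1) :=
      Real.div_rpow hnum.le hdx.le _
    have hsplit : (1 + x * s) ^ (p + 1)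
        = (1 + x * s) ^ (p - 1) * (1 + x * s) ^ (2:ℕ) := by
      rw [← Real.rpow_natCast (1 + x * s) 2, ← Real.rpow_add hdx]
      congr 1; ring
    have hBpos : (0:ℝ) < (1 + x * s) ^ (p - 1) := Real.rpow_pos_of_pos hdx _
    rw [hqpow, hsplit, h2m]
    field_simp
    ring
  have hcont : ContinuousOn (fun a : ℝ =>
      1 - ((s + a) / (1 + a * s)) ^ p - (1 - a ^ 2) * c / (1 - r ^ k))
      (Set.Icc (0:ℝ) 1) := by
    apply ContinuousOn.sub
    apply ContinuousOn.sub continuousOn_const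
    · apply ContinuousOn.rpow_const
      · exact (continuousOn_const.add continuousOn_id).div
          (continuousOn_const.add (continuousOn_id.mul continuousOn_const))
          (fun x hx => (hden x hx).ne')
      · intro x hx; right; linarith
    · exact ((continuousOn_const.sub (continuousOn_pow 2)).mul
        continuousOn_const).div_const _
  have := antitoneOn_of_deriv_nonpos (convex_Icc (0:ℝ) 1) hcont
    (by
      rw [interior_Icc]
      intro x hx
      exact (hderiv x hx).differentiableAt.differentiableWithinAt)
    (by
      rw [interior_Icc]
      intro x hx
      rw [(hderiv x hx).deriv]
      exact part1 x ⟨hx.1.le, hx.2.le⟩)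
  exact this
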